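/- The spectral radius of any finite simple connected graph satisfies λ(G) ≥ (1/|E|) Σ_{uv∈E} √(d_u d_v), i.e., λ(G) is at least the average over edges of the geometric mean of the endpoint degrees. -/

import Mathlib

open Finset

variable {V : Type*}

/-- The product of endpoint degrees, raised to power `α`, as a function on `Sym2 V`. -/
noncomputable def degProd [Fintype V] (G : SimpleGraph V) [DecidableRel G.Adj] (α : ℝ) :
    Sym2 V → ℝ :=
  Sym2.lift ⟨fun u v => ((G.degree u : ℝ) * (G.degree v : ℝ)) ^ α,
    fun u v => by simp [mul_comm]⟩

/-- The general Randić index `R_α(G) = ∑_{uv ∈ E} (d_u d_v)^α`. -/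
noncomputable def randic [Fintype V] [DecidableEq V] (G : SimpleGraph V) [DecidableRel G.Adj]
    (α : ℝ) : ℝ :=
  ∑ e ∈ G.edgeFinset, degProd G α e

/-- `lam` is the largest (real) eigenvalue of the symmetric matrix `A`,
i.e. the spectral radius for an adjacency matrix. -/
def IsMaxEigenvalue [Fintype V] (A : Matrix V V ℝ) (lam : ℝ) : Prop :=
  (∃ x : V → ℝ, x ≠ 0 ∧ A.mulVec x = lam • x) ∧
  ∀ (μ : ℝ) (x : V → ℝ), x ≠ 0 → A.mulVec x = μ • x → μ ≤ lam

/-- The geometric mean of the endpoint degrees, as a function on `Sym2 V`. -/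
noncomputable def degGeomMean [Fintype V] (G : SimpleGraph V) [DecidableRel G.Adj] :
    Sym2 V → ℝ :=
  Sym2.lift ⟨fun u v => Real.sqrt ((G.degree u : ℝ) * (G.degree v : ℝ)),
    fun u v => by simp [mul_comm]⟩

open Matrix in
lemma rayleigh_le_max [Fintype V] [DecidableEq V] {A : Matrix V V ℝ} (hA : A.IsHermitian)
    {lam : ℝ} (hlam : IsMaxEigenvalue A lam) (x : V → ℝ) :
    x ⬝ᵥ (A *ᵥ x) ≤ lam * (x ⬝ᵥ x) := by
  set U : Matrix V V ℝ := (hA.eigenvectorUnitary : Matrix V V ℝ) with hU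
  set μ := hA.eigenvalues with hμ
  have hle : ∀ j, μ j ≤ lam := fun j =>
    hlam.2 _ _ (fun h => hA.eigenvectorBasis.orthonormal.ne_zero j (by ext i; exact congrFun h i))
      (hA.mulVec_eigenvectorBasis j)
  have hUU : U * star U = 1 := Matrix.mem_unitaryGroup_iff.mp hA.eigenvectorUnitary.2
  set y : V → ℝ := star U *ᵥ x with hy
  have hxy : x ᵥ* U = y := by
    funext j
    simp [hy, Matrix.vecMul, Matrix.mulVec, dotProduct, Matrix.star_apply, mul_comm]
  have key : A *ᵥ x = U *ᵥ (fun j => μ j * y j) := by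
    have hd : Matrix.diagonal μ *ᵥ y = fun j => μ j * y j := by
      funext j
      simp [Matrix.mulVec_diagonal]
    have hcoe : RCLike.ofReal ∘ μ = μ := by
      funext i; simp [RCLike.ofReal_real_eq_id]
    calc A *ᵥ x = (U * Matrix.diagonal μ * star U) *ᵥ x := by
          conv_lhs => rw [hA.spectral_theorem]
          rw [hcoe]
          rw [Unitary.conjStarAlgAut_apply]
      _ = U *ᵥ (Matrix.diagonal μ *ᵥ (star U *ᵥ x)) := by
          rw [Matrix.mulVec_mulVec, Matrix.mulVec_mulVec]
      _ = U *ᵥ (fun j => μ j * y j) := by rw [← hy, hd]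
  have h1 : x ⬝ᵥ (A *ᵥ x) = ∑ j, μ j * y j ^ 2 := by
    rw [key, Matrix.dotProduct_mulVec, hxy, dotProduct]
    refine Finset.sum_congr rfl fun j _ => by ring
  have h2 : x ⬝ᵥ x = ∑ j, y j ^ 2 := by
    have : y ⬝ᵥ y = x ⬝ᵥ x := by
      rw [hy, Matrix.dotProduct_mulVec, ← hy, ← hxy, Matrix.vecMul_vecMul, hUU,
        Matrix.vecMul_one]
    rw [← this, dotProduct]
    exact Finset.sum_congr rfl fun j _ => by ring
  rw [h1, h2, Finset.mul_sum]
  exact Finset.sum_le_sum fun j _ =>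
    mul_le_mul_of_nonneg_right (hle j) (sq_nonneg _)

lemma sum_adj_eq_two_mul [Fintype V] [DecidableEq V] (G : SimpleGraph V) [DecidableRel G.Adj]
    (F : Sym2 V → ℝ) :
    (∑ i, ∑ j, if G.Adj i j then F s(i, j) else 0) = 2 * ∑ e ∈ G.edgeFinset, F e := by
  classical
  have hstep : (∑ i, ∑ j, if G.Adj i j then F s(i, j) else 0)
      = ∑ p ∈ (univ ×ˢ univ).filter (fun p : V × V => G.Adj p.1 p.2), F s(p.1, p.2) := by
    rw [Finset.sum_filter, ← Finset.sum_product']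
  rw [hstep]
  rw [← Finset.sum_fiberwise_of_maps_to' (g := fun p : V × V => (s(p.1, p.2) : Sym2 V))
    (t := G.edgeFinset)
    (fun p hp => by
      simp only [Finset.mem_filter] at hp
      exact SimpleGraph.mem_edgeFinset.2 hp.2) F]
  rw [Finset.mul_sum]
  refine Finset.sum_congr rfl fun e he => ?_
  rw [Finset.sum_const]
  have hcard : (((univ ×ˢ univ).filter (fun p : V × V => G.Adj p.1 p.2)).filter
      (fun p => (s(p.1, p.2) : Sym2 V) = e)).card = 2 := by
    induction e with
    | _ u v =>
      have hadj : G.Adj u v := SimpleGraph.mem_edgeFinset.1 he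
      have hne : u ≠ v := hadj.ne
      have : (((univ ×ˢ univ).filter (fun p : V × V => G.Adj p.1 p.2)).filter
          (fun p => (s(p.1, p.2) : Sym2 V) = s(u, v))) = {(u, v), (v, u)} := by
        ext ⟨a, b⟩
        simp only [Finset.mem_filter, Finset.mem_product, Finset.mem_univ, true_and,
          Finset.mem_insert, Finset.mem_singleton, Prod.mk.injEq, Sym2.eq_iff]
        constructor
        · rintro ⟨-, (⟨rfl, rfl⟩ | ⟨rfl, rfl⟩)⟩
          · exact Or.inl ⟨rfl, rfl⟩
          · exact Or.inr ⟨rfl, rfl⟩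
        · rintro (⟨rfl, rfl⟩ | ⟨rfl, rfl⟩)
          · exact ⟨hadj, Or.inl ⟨rfl, rfl⟩⟩
          · exact ⟨hadj.symm, Or.inr ⟨rfl, rfl⟩⟩
      rw [this, Finset.card_insert_of_notMem (by simp [Prod.ext_iff, hne]),
        Finset.card_singleton]
  rw [hcard]
  simp [mul_comm]

open Matrix in
theorem spectral_radius_ge_avg_geom_mean_degree
    [Fintype V] [DecidableEq V] [Nonempty V] (G : SimpleGraph V) [DecidableRel G.Adj]
    (hconn : G.Connected) (hE : G.edgeFinset.Nonempty)
    (lam : ℝ) (hlam : IsMaxEigenvalue (G.adjMatrix ℝ) lam) :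
    lam ≥ (1 / (G.edgeFinset.card : ℝ)) * ∑ e ∈ G.edgeFinset, degGeomMean G e := by
  classical
  have hA : (G.adjMatrix ℝ).IsHermitian := by
    ext i j
    simp [Matrix.conjTranspose_apply, SimpleGraph.adj_comm]
  set x : V → ℝ := fun v => Real.sqrt (G.degree v) with hx
  have hray := rayleigh_le_max hA hlam x
  have h1 : x ⬝ᵥ ((G.adjMatrix ℝ) *ᵥ x) = 2 * ∑ e ∈ G.edgeFinset, degGeomMean G e := by
    rw [SimpleGraph.dotProduct_mulVec_adjMatrix]
    rw [← sum_adj_eq_two_mul G (degGeomMean G)]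
    refine Finset.sum_congr rfl fun i _ => Finset.sum_congr rfl fun j _ => ?_
    split
    · simp only [degGeomMean, Sym2.lift_mk, hx]
      rw [Real.sqrt_mul (Nat.cast_nonneg _)]
    · rfl
  have h2 : x ⬝ᵥ x = 2 * (G.edgeFinset.card : ℝ) := by
    have : x ⬝ᵥ x = ∑ v, (G.degree v : ℝ) := by
      refine Finset.sum_congr rfl fun v _ => ?_
      simp [hx, Real.mul_self_sqrt (Nat.cast_nonneg _)]
    rw [this]
    rw [← Nat.cast_sum]
    rw [G.sum_degrees_eq_twice_card_edges]
    push_cast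
    ring
  rw [h1, h2] at hray
  have hEpos : (0 : ℝ) < (G.edgeFinset.card : ℝ) := by
    exact_mod_cast hE.card_pos
  rw [ge_iff_le, one_div, inv_mul_le_iff₀ hEpos]
  nlinarith [hray]
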